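/- Let (X,d) be a metric space, μ a Borel measure on X, and scl a scaling. Then the μ-essential supremum of the lower local scale of μ is at most the Hausdorff scale of X, and the μ-essential supremum of the upper local scale of μ is at most the packing scale of X: ess sup lower-scl_loc μ ≤ scl_H X and ess sup upper-scl_loc μ ≤ scl_P X. -/

import Mathlib

open Filter MeasureTheory Metric Set
open scoped ENNReal Topology NNReal

noncomputable section

/-- A *scaling* is a family `(s α)_{α>0}` of positive non-decreasing functions on `(0,1)`
such that for all `α > β > 0` there is `λ₀ > 1` with, for every `λ ∈ (1, λ₀)`,
`s α ε / s β (ε^λ) → 0` and `s α ε / (s β ε)^λ → 0` as `ε → 0⁺`. -/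
def IsScaling (s : ℝ → ℝ → ℝ) : Prop :=
  (∀ α : ℝ, 0 < α → ∀ ε ∈ Set.Ioo (0:ℝ) 1, 0 < s α ε) ∧
  (∀ α : ℝ, 0 < α → MonotoneOn (s α) (Set.Ioo (0:ℝ) 1)) ∧
  (∀ α β : ℝ, 0 < β → β < α → ∃ l₀ > (1:ℝ), ∀ l ∈ Set.Ioo (1:ℝ) l₀,
    Tendsto (fun ε : ℝ => s α ε / s β (ε ^ l)) (𝓝[>] (0:ℝ)) (𝓝 0) ∧
    Tendsto (fun ε : ℝ => s α ε / (s β ε) ^ l) (𝓝[>] (0:ℝ)) (𝓝 0))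

/-- The covering number `N_ε(E)`: minimal cardinality of a finite cover of `E` by balls of
radius `ε` centered in `E` (`+∞` if there is no such finite cover). -/
def coveringNumber {X : Type*} [MetricSpace X] (E : Set X) (ε : ℝ) : ℝ≥0∞ :=
  ⨅ (t : Finset X) (_ : (↑t : Set X) ⊆ E ∧ E ⊆ ⋃ x ∈ t, ball x ε), (t.card : ℝ≥0∞)

/-- Lower box scale of a set. -/
def lowerBoxScale {X : Type*} [MetricSpace X] (s : ℝ → ℝ → ℝ) (E : Set X) : ℝ≥0∞ :=
  ⨆ (α : ℝ) (_ : 0 < α ∧ Tendsto (fun ε : ℝ => coveringNumber E ε * ENNReal.ofReal (s α ε))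
      (𝓝[>] (0:ℝ)) (𝓝 (⊤ : ℝ≥0∞))), ENNReal.ofReal α

/-- Upper box scale of a set. -/
def upperBoxScale {X : Type*} [MetricSpace X] (s : ℝ → ℝ → ℝ) (E : Set X) : ℝ≥0∞ :=
  ⨅ (α : ℝ) (_ : 0 < α ∧ Tendsto (fun ε : ℝ => coveringNumber E ε * ENNReal.ofReal (s α ε))
      (𝓝[>] (0:ℝ)) (𝓝 (0 : ℝ≥0∞))), ENNReal.ofReal α

/-- `H_ε^φ(E)`: Hausdorff pre-measure at scale `ε`, via countable covers by balls of radii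
at most `ε`. -/
def hausdorffPre {X : Type*} [MetricSpace X] (φ : ℝ → ℝ) (E : Set X) (ε : ℝ) : ℝ≥0∞ :=
  ⨅ (c : ℕ → X) (r : ℕ → ℝ) (t : Set ℕ)
    (_ : (∀ n ∈ t, r n ∈ Set.Ioc (0:ℝ) ε) ∧ E ⊆ ⋃ n ∈ t, ball (c n) (r n)),
    ∑' n : t, ENNReal.ofReal (φ (r n))

/-- `H^φ(E) = lim_{ε→0} H_ε^φ(E)`. -/
def hausdorffMeasureOf {X : Type*} [MetricSpace X] (φ : ℝ → ℝ) (E : Set X) : ℝ≥0∞ :=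
  ⨆ (ε : ℝ) (_ : 0 < ε), hausdorffPre φ E ε

/-- Hausdorff scale of a set. -/
def hausdorffScale {X : Type*} [MetricSpace X] (s : ℝ → ℝ → ℝ) (E : Set X) : ℝ≥0∞ :=
  ⨆ (α : ℝ) (_ : 0 < α ∧ hausdorffMeasureOf (s α) E = ⊤), ENNReal.ofReal α

/-- Packing scale of a set, via countable covers and upper box scales. -/
def packingScale {X : Type*} [MetricSpace X] (s : ℝ → ℝ → ℝ) (A : Set X) : ℝ≥0∞ :=
  ⨅ (E : ℕ → Set X) (_ : (⋃ n, E n) = A), ⨆ n, upperBoxScale s (E n)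

/-- Lower local scale of a measure at a point. -/
def lowerLocalScale {X : Type*} [MetricSpace X] [MeasurableSpace X]
    (s : ℝ → ℝ → ℝ) (μ : Measure X) (x : X) : ℝ≥0∞ :=
  ⨆ (α : ℝ) (_ : 0 < α ∧ Tendsto (fun ε : ℝ => μ (ball x ε) / ENNReal.ofReal (s α ε))
      (𝓝[>] (0:ℝ)) (𝓝 (0 : ℝ≥0∞))), ENNReal.ofReal α

/-- Upper local scale of a measure at a point. -/
def upperLocalScale {X : Type*} [MetricSpace X] [MeasurableSpace X]
    (s : ℝ → ℝ → ℝ) (μ : Measure X) (x : X) : ℝ≥0∞ :=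
  ⨅ (α : ℝ) (_ : 0 < α ∧ Tendsto (fun ε : ℝ => μ (ball x ε) / ENNReal.ofReal (s α ε))
      (𝓝[>] (0:ℝ)) (𝓝 (⊤ : ℝ≥0∞))), ENNReal.ofReal α

/-- Scale of a measure: infimum of the scale over Borel sets of positive measure. -/
def measureScale {X : Type*} [MetricSpace X] [MeasurableSpace X]
    (sc : Set X → ℝ≥0∞) (μ : Measure X) : ℝ≥0∞ :=
  ⨅ (E : Set X) (_ : MeasurableSet E ∧ 0 < μ E), sc E

/-- `*`-scale of a measure: infimum of the scale over Borel sets of full measure. -/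
def measureScaleStar {X : Type*} [MetricSpace X] [MeasurableSpace X]
    (sc : Set X → ℝ≥0∞) (μ : Measure X) : ℝ≥0∞ :=
  ⨅ (E : Set X) (_ : MeasurableSet E ∧ μ Eᶜ = 0), sc E

/-- Quantization number `Q_μ(ε)`. -/
def quantizationNumber {X : Type*} [MetricSpace X] [MeasurableSpace X]
    (μ : Measure X) (ε : ℝ) : ℝ≥0∞ :=
  ⨅ (t : Finset X) (_ : ∫⁻ x, (⨅ c ∈ t, edist x c) ∂μ ≤ ENNReal.ofReal ε), (t.card : ℝ≥0∞)

/-- Lower quantization scale of a measure. -/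
def lowerQuantScale {X : Type*} [MetricSpace X] [MeasurableSpace X]
    (s : ℝ → ℝ → ℝ) (μ : Measure X) : ℝ≥0∞ :=
  ⨆ (α : ℝ) (_ : 0 < α ∧ Tendsto (fun ε : ℝ => quantizationNumber μ ε * ENNReal.ofReal (s α ε))
      (𝓝[>] (0:ℝ)) (𝓝 (⊤ : ℝ≥0∞))), ENNReal.ofReal α

/-- Upper quantization scale of a measure. -/
def upperQuantScale {X : Type*} [MetricSpace X] [MeasurableSpace X]
    (s : ℝ → ℝ → ℝ) (μ : Measure X) : ℝ≥0∞ :=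
  ⨅ (α : ℝ) (_ : 0 < α ∧ Tendsto (fun ε : ℝ => quantizationNumber μ ε * ENNReal.ofReal (s α ε))
      (𝓝[>] (0:ℝ)) (𝓝 (0 : ℝ≥0∞))), ENNReal.ofReal α

/-- Packing number `Ñ_ε(E)`: maximal cardinality of an `ε`-separated subset of `E`. -/
def packingNumber {X : Type*} [MetricSpace X] (E : Set X) (ε : ℝ) : ℝ≥0∞ :=
  ⨆ (t : Finset X) (_ : (↑t : Set X) ⊆ E ∧ ∀ x ∈ t, ∀ y ∈ t, x ≠ y → ε ≤ dist x y),
    (t.card : ℝ≥0∞)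

/-- `P_ε^φ(E)`: supremum of `Σ φ(r_i)` over `ε`-packs of `E` (pairwise disjoint balls of `E`,
centered in `E`, with radii at most `ε`). -/
def packingPre {X : Type*} [MetricSpace X] (φ : ℝ → ℝ) (E : Set X) (ε : ℝ) : ℝ≥0∞ :=
  ⨆ (t : Finset (X × ℝ)) (_ : (∀ p ∈ t, p.1 ∈ E ∧ p.2 ∈ Set.Ioc (0:ℝ) ε) ∧
      (↑t : Set (X × ℝ)).Pairwise fun p q => Disjoint (ball p.1 p.2 ∩ E) (ball q.1 q.2 ∩ E)),
    ∑ p ∈ t, ENNReal.ofReal (φ p.2)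

/-- The packing pre-measure `P_0^φ(E) = lim_{ε→0} P_ε^φ(E)`. -/
def packingPre0 {X : Type*} [MetricSpace X] (φ : ℝ → ℝ) (E : Set X) : ℝ≥0∞ :=
  ⨅ (ε : ℝ) (_ : 0 < ε), packingPre φ E ε

/-- The packing `φ`-measure `P^φ(E)`. -/
def packingMeasureOf {X : Type*} [MetricSpace X] (φ : ℝ → ℝ) (E : Set X) : ℝ≥0∞ :=
  ⨅ (F : ℕ → Set X) (_ : (⋃ n, F n) = E), ∑' n, packingPre0 φ (F n)


section ScaleProofAux

open Filter MeasureTheory Metric Set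
open scoped ENNReal Topology NNReal

variable {s : ℝ → ℝ → ℝ}

private theorem evIoo : ∀ᶠ ε in 𝓝[>] (0:ℝ), ε ∈ Set.Ioo (0:ℝ) 1 :=
  eventually_mem_set.2 (Ioo_mem_nhdsGT_of_mem ⟨le_refl 0, one_pos⟩)

private theorem exists_lambda (hs : IsScaling s) {β α : ℝ} (hβ : 0 < β) (hβα : β < α) :
    ∃ l : ℝ, 1 < l ∧ ∀ᶠ ε in 𝓝[>] (0:ℝ),
      s α ε ≤ s β (ε ^ l) ∧ s α ε ≤ (s β ε) ^ l := by
  obtain ⟨l₀, hl₀, h⟩ := hs.2.2 α β hβ hβα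
  refine ⟨(1+l₀)/2, by linarith, ?_⟩
  have hmem : (1+l₀)/2 ∈ Set.Ioo (1:ℝ) l₀ := ⟨by linarith, by linarith⟩
  obtain ⟨h1, h2⟩ := h _ hmem
  have hl1 : (0:ℝ) < (1+l₀)/2 := by linarith
  filter_upwards [evIoo, h1.eventually_lt_const one_pos,
    h2.eventually_lt_const one_pos] with ε hε hr1 hr2
  have hεl : ε ^ ((1+l₀)/2) ∈ Set.Ioo (0:ℝ) 1 :=
    ⟨Real.rpow_pos_of_pos hε.1 _, Real.rpow_lt_one hε.1.le hε.2 hl1⟩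
  have hd1 : 0 < s β (ε ^ ((1+l₀)/2)) := hs.1 β hβ _ hεl
  have hd2 : 0 < (s β ε) ^ ((1+l₀)/2) := Real.rpow_pos_of_pos (hs.1 β hβ ε hε) _
  exact ⟨((div_lt_one hd1).1 hr1).le, ((div_lt_one hd2).1 hr2).le⟩

private theorem sc_small (hs : IsScaling s) {α : ℝ} (hα : 0 < α) {c : ℝ} (hc : 0 < c) :
    ∀ᶠ ε in 𝓝[>] (0:ℝ), s α ε < c := by
  obtain ⟨l₀, hl₀, h⟩ := hs.2.2 α (α/2) (half_pos hα) (half_lt_self hα)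
  set l := (1+l₀)/2 with hldef
  have hmem : l ∈ Set.Ioo (1:ℝ) l₀ := ⟨by simp only [hldef]; linarith, by simp only [hldef]; linarith⟩
  obtain ⟨h1, _⟩ := h _ hmem
  have hhalf : (1/2 : ℝ) ∈ Set.Ioo (0:ℝ) 1 := by norm_num
  set K := s (α/2) (1/2) with hK
  have hKpos : 0 < K := hs.1 _ (half_pos hα) _ hhalf
  have hcK : 0 < c / K := div_pos hc hKpos
  filter_upwards [evIoo, h1.eventually_lt_const hcK,
    eventually_mem_set.2 (Ioo_mem_nhdsGT_of_mem (⟨le_refl 0, by norm_num⟩ : (0:ℝ) ∈ Set.Ico (0:ℝ) (1/2)))]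
    with ε hε hr hε2
  have hεl : ε ^ l ∈ Set.Ioo (0:ℝ) 1 :=
    ⟨Real.rpow_pos_of_pos hε.1 _, Real.rpow_lt_one hε.1.le hε.2 (by linarith [hmem.1])⟩
  have hle : ε ^ l ≤ ε := by
    calc ε ^ l ≤ ε ^ (1:ℝ) :=
          Real.rpow_le_rpow_of_exponent_ge hε.1 hε.2.le (by linarith [hmem.1])
      _ = ε := Real.rpow_one ε
  have hsb : s (α/2) (ε ^ l) ≤ K :=
    hs.2.1 _ (half_pos hα) hεl hhalf (le_trans hle (le_of_lt hε2.2))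
  have hd : 0 < s (α/2) (ε ^ l) := hs.1 _ (half_pos hα) _ hεl
  calc s α ε = s α ε / s (α/2) (ε ^ l) * s (α/2) (ε ^ l) := (div_mul_cancel₀ _ hd.ne').symm
    _ < (c / K) * K := by
        have h1 : s α ε / s (α/2) (ε ^ l) * s (α/2) (ε ^ l) ≤ s α ε / s (α/2) (ε ^ l) * K :=
          mul_le_mul_of_nonneg_left hsb (div_nonneg (hs.1 α hα ε hε).le hd.le)
        have h2 : s α ε / s (α/2) (ε ^ l) * K < (c / K) * K :=
          mul_lt_mul_of_pos_right hr hKpos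
        exact lt_of_le_of_lt h1 h2
    _ = c := div_mul_cancel₀ c hKpos.ne'

private theorem sc_tendsto_zero (hs : IsScaling s) {α : ℝ} (hα : 0 < α) :
    Tendsto (fun ε => s α ε) (𝓝[>] (0:ℝ)) (𝓝 0) := by
  rw [tendsto_order]
  constructor
  · intro b hb
    filter_upwards [evIoo] with ε hε
    exact lt_trans hb (hs.1 α hα ε hε)
  · intro b hb
    exact sc_small hs hα hb

private theorem sc_le_eventually (hs : IsScaling s) {β α : ℝ} (hβ : 0 < β) (hβα : β < α) :
    ∀ᶠ ε in 𝓝[>] (0:ℝ), s α ε ≤ s β ε := by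
  obtain ⟨l, hl, hev⟩ := exists_lambda hs hβ hβα
  filter_upwards [evIoo, hev] with ε hε h
  have hεl : ε ^ l ∈ Set.Ioo (0:ℝ) 1 :=
    ⟨Real.rpow_pos_of_pos hε.1 _, Real.rpow_lt_one hε.1.le hε.2 (by linarith)⟩
  have hle : ε ^ l ≤ ε := by
    calc ε ^ l ≤ ε ^ (1:ℝ) :=
          Real.rpow_le_rpow_of_exponent_ge hε.1 hε.2.le (by linarith)
      _ = ε := Real.rpow_one ε
  exact le_trans h.1 (hs.2.1 β hβ hεl hε hle)

end ScaleProofAux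
section ScaleProofPart1

open Filter MeasureTheory Metric Set
open scoped ENNReal Topology NNReal

variable {s : ℝ → ℝ → ℝ} {X : Type*} [MetricSpace X] [MeasurableSpace X]

private theorem ratio_downward (hs : IsScaling s) {μ : Measure X} {x : X} {q α : ℝ}
    (hq : 0 < q) (hqα : q < α)
    (h : Tendsto (fun ε : ℝ => μ (ball x ε) / ENNReal.ofReal (s α ε)) (𝓝[>] (0:ℝ)) (𝓝 0)) :
    Tendsto (fun ε : ℝ => μ (ball x ε) / ENNReal.ofReal (s q ε)) (𝓝[>] (0:ℝ)) (𝓝 0) := by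
  refine tendsto_of_tendsto_of_tendsto_of_le_of_le' tendsto_const_nhds h
    (Eventually.of_forall fun ε => zero_le) ?_
  filter_upwards [sc_le_eventually hs hq hqα] with ε hε
  exact ENNReal.div_le_div_left (ENNReal.ofReal_le_ofReal hε) _

private theorem hausdorff_top (hs : IsScaling s) {μ : Measure X} {A : Set X}
    (hA : 0 < μ A) {q β : ℝ} (hβ : 0 < β) (hβq : β < q)
    (hloc : ∀ x ∈ A, Tendsto (fun ε : ℝ => μ (ball x ε) / ENNReal.ofReal (s q ε))
      (𝓝[>] (0:ℝ)) (𝓝 0)) :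
    hausdorffMeasureOf (s β) (Set.univ : Set X) = ⊤ := by
  have hq : 0 < q := lt_trans hβ hβq
  obtain ⟨l, hl, hev⟩ := exists_lambda hs hβ hβq
  obtain ⟨η₁, hη₁pos, hη₁⟩ := mem_nhdsGT_iff_exists_Ioo_subset.1 hev
  set C : ℝ := (2:ℝ) ^ l with hC
  have hCpos : 0 < C := Real.rpow_pos_of_pos two_pos l
  set τ : ℝ := C⁻¹ ^ (1/(l-1)) with hτ
  have hτpos : 0 < τ := Real.rpow_pos_of_pos (inv_pos.2 hCpos) _
  set ε₃ : ℝ := min (min (η₁/4) τ) (1/4) with hε₃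
  have hη₁pos' : (0:ℝ) < η₁ := hη₁pos
  have hε₃pos : 0 < ε₃ := lt_min (lt_min (by linarith) hτpos) (by norm_num)
  have key : ∀ r : ℝ, r ∈ Set.Ioc (0:ℝ) ε₃ → s q (2*r) ≤ s β r ∧ 2*r < 1 := by
    intro r hr
    have hr0 := hr.1
    have hrτ : r ≤ τ := le_trans hr.2 (le_trans (min_le_left _ _) (min_le_right _ _))
    have hrη : 2*r < η₁ := by
      have h4 : r ≤ η₁/4 := le_trans hr.2 (le_trans (min_le_left _ _) (min_le_left _ _))
      linarith
    have hr4 : r ≤ 1/4 := le_trans hr.2 (min_le_right _ _)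
    have h2r1 : 2*r < 1 := by linarith
    have hpow : (2*r) ^ l ≤ r := by
      have h1 : (2*r) ^ l = C * r ^ l := Real.mul_rpow (by norm_num) hr0.le
      have hτl : τ ^ (l-1) = C⁻¹ := by
        rw [hτ, ← Real.rpow_mul (inv_pos.2 hCpos).le, one_div,
          inv_mul_cancel₀ (by linarith : l - 1 ≠ 0), Real.rpow_one]
      have h2 : r ^ (l-1) ≤ C⁻¹ := by
        rw [← hτl]; exact Real.rpow_le_rpow hr0.le hrτ (by linarith)
      have hrl : r ^ l = r ^ (l-1) * r := by
        rw [Real.rpow_sub_one hr0.ne' l, div_mul_cancel₀ _ hr0.ne']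
      calc (2*r) ^ l = C * (r ^ (l-1) * r) := by rw [h1, hrl]
        _ ≤ C * (C⁻¹ * r) := by
            apply mul_le_mul_of_nonneg_left _ hCpos.le
            exact mul_le_mul_of_nonneg_right h2 hr0.le
        _ = r := by field_simp
    have hmem2r : (2*r) ∈ Set.Ioo (0:ℝ) 1 := ⟨by linarith, h2r1⟩
    have h2rl_pos : 0 < (2*r)^l := Real.rpow_pos_of_pos hmem2r.1 _
    have hrIoo : r ∈ Set.Ioo (0:ℝ) 1 := ⟨hr0, by linarith⟩
    have hP := hη₁ ⟨hmem2r.1, hrη⟩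
    exact ⟨le_trans hP.1
      (hs.2.1 β hβ ⟨h2rl_pos, lt_of_le_of_lt hpow hrIoo.2⟩ hrIoo hpow), h2r1⟩
  -- the measure constant
  set c : ℝ≥0∞ := min (μ A / 2) 1 with hc
  have hcpos : 0 < c := lt_min (ENNReal.div_pos hA.ne' (by norm_num)) one_pos
  have hcne : c ≠ ⊤ := (lt_of_le_of_lt (min_le_right _ _) ENNReal.one_lt_top).ne
  have hclt : c < μ A := by
    rcases eq_or_ne (μ A) ⊤ with h | h
    · rw [h]; exact lt_of_le_of_lt (min_le_right _ _) ENNReal.one_lt_top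
    · exact lt_of_le_of_lt (min_le_left _ _) (ENNReal.half_lt_self hA.ne' h)
  have main : ∀ δr : ℝ, 0 < δr →
      c / ENNReal.ofReal δr ≤ hausdorffMeasureOf (s β) (Set.univ : Set X) := by
    intro δr hδr
    set An : ℕ → Set X := fun n => {x | x ∈ A ∧ ∀ ε ∈ Set.Ioo (0:ℝ) (1/(n+1)),
      μ (ball x ε) ≤ ENNReal.ofReal δr * ENNReal.ofReal (s q ε)} with hAn
    have hmono : Monotone An := by
      intro m n hmn x hx
      refine ⟨hx.1, fun ε hε => hx.2 ε ⟨hε.1, lt_of_lt_of_le hε.2 ?_⟩⟩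
      apply one_div_le_one_div_of_le (by positivity)
      have : (m:ℝ) ≤ n := Nat.cast_le.2 hmn
      linarith
    have hunion : A ⊆ ⋃ n, An n := by
      intro x hx
      have hx' := hloc x hx
      have hev0 : ∀ᶠ ε in 𝓝[>] (0:ℝ),
          μ (ball x ε) ≤ ENNReal.ofReal δr * ENNReal.ofReal (s q ε) := by
        filter_upwards [evIoo, hx'.eventually_lt_const (ENNReal.ofReal_pos.2 hδr)] with ε hε hlt
        have hd0 : ENNReal.ofReal (s q ε) ≠ 0 := by
          simp only [ne_eq, ENNReal.ofReal_eq_zero, not_le]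
          exact hs.1 q hq ε hε
        exact (ENNReal.div_le_iff_le_mul (Or.inl hd0) (Or.inl ENNReal.ofReal_ne_top)).1 hlt.le
      obtain ⟨u, hu, hsub⟩ := mem_nhdsGT_iff_exists_Ioo_subset.1 hev0
      obtain ⟨n, hn⟩ := exists_nat_one_div_lt (mem_Ioi.1 hu)
      exact mem_iUnion.2 ⟨n, hx, fun ε hε => hsub ⟨hε.1, lt_trans hε.2 hn⟩⟩
    have hsup : c < ⨆ n, μ (An n) := by
      have h1 : μ A ≤ μ (⋃ n, An n) := measure_mono hunion
      rw [hmono.directed_le.measure_iUnion] at h1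
      exact lt_of_lt_of_le hclt h1
    obtain ⟨n, hn⟩ := lt_iSup_iff.1 hsup
    set ε' : ℝ := min ε₃ (1/(2*n+3)) with hε'
    have hε'pos : 0 < ε' := lt_min hε₃pos (by positivity)
    have hpre : c / ENNReal.ofReal δr ≤ hausdorffPre (s β) (Set.univ : Set X) ε' := by
      rw [hausdorffPre]
      refine le_iInf fun cc => le_iInf fun rr => le_iInf fun t => le_iInf fun hcover => ?_
      obtain ⟨hrad, hcov⟩ := hcover
      classical
      set t' : Set ℕ := {j | j ∈ t ∧ (ball (cc j) (rr j) ∩ An n).Nonempty} with ht'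
      have ht't : t' ⊆ t := fun j hj => hj.1
      have hsubcov : An n ⊆ ⋃ j ∈ t', ball (cc j) (rr j) := by
        intro x hx
        obtain ⟨j, hjt, hj⟩ := mem_iUnion₂.1 (hcov (mem_univ x))
        exact mem_iUnion₂.2 ⟨j, ⟨hjt, ⟨x, hj, hx⟩⟩, hj⟩
      have hball : ∀ j ∈ t',
          μ (ball (cc j) (rr j)) ≤ ENNReal.ofReal δr * ENNReal.ofReal (s β (rr j)) := by
        intro j hj
        obtain ⟨hjt, x, hxball, hxA⟩ := hj
        have hrj := hrad j hjt
        have hrj3 : rr j ∈ Set.Ioc (0:ℝ) ε₃ := ⟨hrj.1, le_trans hrj.2 (min_le_left _ _)⟩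
        have hsub2 : ball (cc j) (rr j) ⊆ ball x (2 * rr j) := by
          apply ball_subset_ball'
          have hd : dist (cc j) x < rr j := by rw [dist_comm]; exact hxball
          linarith
        have h2rn : 2 * rr j ∈ Set.Ioo (0:ℝ) (1/(n+1)) := by
          constructor
          · linarith [hrj.1]
          · have hle : rr j ≤ 1/(2*n+3) := le_trans hrj.2 (min_le_right _ _)
            have h23 : (2:ℝ)/(2*n+3) < 1/(n+1) := by
              rw [div_lt_div_iff₀ (by positivity) (by positivity)]
              push_cast; ring_nf; linarith
            have h2rrj : 2 * rr j ≤ 2/(2*n+3) := by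
              have := mul_le_mul_of_nonneg_left hle (by norm_num : (0:ℝ) ≤ 2)
              calc 2 * rr j ≤ 2 * (1/(2*n+3)) := this
                _ = 2/(2*n+3) := by ring
            linarith
        calc μ (ball (cc j) (rr j)) ≤ μ (ball x (2*rr j)) := measure_mono hsub2
          _ ≤ ENNReal.ofReal δr * ENNReal.ofReal (s q (2*rr j)) := hxA.2 _ h2rn
          _ ≤ ENNReal.ofReal δr * ENNReal.ofReal (s β (rr j)) := by
              exact mul_le_mul_right (ENNReal.ofReal_le_ofReal (key _ hrj3).1) _
      have hchain : c ≤ ENNReal.ofReal δr * ∑' j : t, ENNReal.ofReal (s β (rr j)) := by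
        have h1 : μ (An n) ≤ ∑' j : t', μ (ball (cc j) (rr j)) :=
          le_trans (measure_mono hsubcov) (measure_biUnion_le μ (t'.to_countable) _)
        have h2 : ∑' j : t', μ (ball (cc j) (rr j))
            ≤ ∑' j : t', ENNReal.ofReal δr * ENNReal.ofReal (s β (rr j)) :=
          Summable.tsum_le_tsum (fun j => hball j j.2) ENNReal.summable ENNReal.summable
        have h3 : ∑' j : t', ENNReal.ofReal δr * ENNReal.ofReal (s β (rr j))
            = ENNReal.ofReal δr * ∑' j : t', ENNReal.ofReal (s β (rr j)) :=
          ENNReal.tsum_mul_left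
        have h4 : ∑' j : t', ENNReal.ofReal (s β (rr j))
            ≤ ∑' j : t, ENNReal.ofReal (s β (rr j)) :=
          Summable.tsum_le_tsum_of_inj (Set.inclusion ht't) (Set.inclusion_injective ht't)
            (fun _ _ => zero_le) (fun j => le_rfl) ENNReal.summable ENNReal.summable
        calc c ≤ μ (An n) := hn.le
          _ ≤ ∑' j : t', μ (ball (cc j) (rr j)) := h1
          _ ≤ ENNReal.ofReal δr * ∑' j : t', ENNReal.ofReal (s β (rr j)) := h3 ▸ h2
          _ ≤ ENNReal.ofReal δr * ∑' j : t, ENNReal.ofReal (s β (rr j)) :=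
              mul_le_mul_right h4 _
      rw [ENNReal.div_le_iff_le_mul
        (Or.inl (by simp only [ne_eq, ENNReal.ofReal_eq_zero, not_le]; exact hδr))
        (Or.inl ENNReal.ofReal_ne_top)]
      rw [mul_comm] at hchain
      exact hchain
    calc c / ENNReal.ofReal δr ≤ hausdorffPre (s β) (Set.univ : Set X) ε' := hpre
      _ ≤ hausdorffMeasureOf (s β) (Set.univ : Set X) := by
          rw [hausdorffMeasureOf]
          exact le_iSup₂_of_le ε' hε'pos le_rfl
  -- conclude ⊤
  by_contra hne
  obtain ⟨k, hk⟩ := ENNReal.exists_nat_gt hne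
  have hctr : (0:ℝ) < c.toReal := ENNReal.toReal_pos hcpos.ne' hcne
  have hδr : (0:ℝ) < c.toReal / (k+1) := by positivity
  have h1 := main _ hδr
  have h2 : (k : ℝ≥0∞) ≤ c / ENNReal.ofReal (c.toReal / (k+1)) := by
    rw [ENNReal.le_div_iff_mul_le
      (Or.inl (by simp only [ne_eq, ENNReal.ofReal_eq_zero, not_le]; exact hδr))
      (Or.inl ENNReal.ofReal_ne_top)]
    have : (k : ℝ≥0∞) * ENNReal.ofReal (c.toReal / (k+1))
        = ENNReal.ofReal ((k:ℝ) * (c.toReal / (k+1))) := by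
      rw [ENNReal.ofReal_mul (by positivity), ENNReal.ofReal_natCast]
    rw [this]
    calc ENNReal.ofReal ((k:ℝ) * (c.toReal / (k+1))) ≤ ENNReal.ofReal c.toReal := by
          apply ENNReal.ofReal_le_ofReal
          rw [mul_div_assoc']
          rw [div_le_iff₀ (by positivity)]
          nlinarith [hctr]
      _ = c := ENNReal.ofReal_toReal hcne
  exact absurd (le_trans h2 h1) (not_le.2 hk)

end ScaleProofPart1
section ScaleProofPart1b

open Filter MeasureTheory Metric Set
open scoped ENNReal Topology NNReal

variable {s : ℝ → ℝ → ℝ} {X : Type*} [MetricSpace X] [MeasurableSpace X]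

private theorem toNNReal_coe_eq_ofReal (p : ℚ) :
    ((Real.toNNReal (p:ℝ) : ℝ≥0) : ℝ≥0∞) = ENNReal.ofReal (p:ℝ) := rfl

private theorem part1 (hs : IsScaling s) (μ : Measure X) :
    essSup (lowerLocalScale s μ) μ ≤ hausdorffScale s (Set.univ : Set X) := by
  set H := hausdorffScale s (Set.univ : Set X) with hH
  refine essSup_le_of_ae_le _ ?_
  classical
  set Aq : ℚ → Set X := fun p => {x | Tendsto
    (fun ε : ℝ => μ (ball x ε) / ENNReal.ofReal (s (p:ℝ) ε)) (𝓝[>] (0:ℝ)) (𝓝 0)} with hAq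
  set N : Set X := ⋃ p : ℚ, if H < ENNReal.ofReal (p:ℝ) then Aq p else ∅ with hN
  have hNnull : μ N = 0 := by
    rw [hN, measure_iUnion_null_iff]
    intro p
    split_ifs with hp
    · by_contra hpos
      rw [← ne_eq, ← pos_iff_ne_zero] at hpos
      obtain ⟨pβ, hpβ0, h1, h2⟩ := ENNReal.lt_iff_exists_rat_btwn.1 hp
      rw [toNNReal_coe_eq_ofReal] at h1 h2
      have hβpos : (0:ℝ) < (pβ:ℝ) := by
        by_contra hle
        push_neg at hle
        rw [ENNReal.ofReal_eq_zero.2 hle] at h1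
        exact absurd h1 (not_lt_of_ge (zero_le))
      have hppos : (0:ℝ) < (p:ℝ) := by
        by_contra hle
        push_neg at hle
        rw [ENNReal.ofReal_eq_zero.2 hle] at h2
        exact absurd h2 (not_lt_of_ge (zero_le))
      have hβq : (pβ:ℝ) < (p:ℝ) := (ENNReal.ofReal_lt_ofReal_iff hppos).1 h2
      have htop := hausdorff_top hs hpos hβpos hβq (fun x hx => hx)
      have hge : ENNReal.ofReal (pβ:ℝ) ≤ H := by
        rw [hH, hausdorffScale]
        exact le_iSup₂_of_le (pβ:ℝ) ⟨hβpos, htop⟩ le_rfl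
      exact absurd h1 (not_lt_of_ge hge)
    · exact measure_empty
  have hae : ∀ᵐ x ∂μ, x ∉ N := by
    rw [ae_iff]
    simpa using hNnull
  filter_upwards [hae] with x hx
  by_contra hlt
  push_neg at hlt
  rw [lowerLocalScale] at hlt
  obtain ⟨α, hα⟩ := lt_iSup_iff.1 hlt
  obtain ⟨hcond, hαlt⟩ := lt_iSup_iff.1 hα
  obtain ⟨p, hp0, h1, h2⟩ := ENNReal.lt_iff_exists_rat_btwn.1 hαlt
  rw [toNNReal_coe_eq_ofReal] at h1 h2
  have hppos : (0:ℝ) < (p:ℝ) := by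
    by_contra hle
    push_neg at hle
    rw [ENNReal.ofReal_eq_zero.2 hle] at h1
    exact absurd h1 (not_lt_of_ge (zero_le))
  have hαpos : (0:ℝ) < α := hcond.1
  have hpα : (p:ℝ) < α := (ENNReal.ofReal_lt_ofReal_iff hαpos).1 h2
  have hxAq : x ∈ Aq p := ratio_downward hs hppos hpα hcond.2
  refine hx ?_
  rw [hN]
  refine mem_iUnion.2 ⟨p, ?_⟩
  rw [if_pos h1]
  exact hxAq

end ScaleProofPart1b
section ScaleProofPart2

open Filter MeasureTheory Metric Set
open scoped ENNReal Topology NNReal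

variable {s : ℝ → ℝ → ℝ} {X : Type*} [MetricSpace X] [MeasurableSpace X]

private theorem core2 (hs : IsScaling s) (μ : Measure X) {E : Set X} {α q : ℝ}
    (hα : 0 < α) (hαq : α < q)
    (hbox : Tendsto (fun δ : ℝ => coveringNumber E δ * ENNReal.ofReal (s α δ))
      (𝓝[>] (0:ℝ)) (𝓝 (0:ℝ≥0∞))) (M : ℕ) :
    μ {x | x ∈ E ∧ ∀ η > (0:ℝ), ∃ r ∈ Set.Ioo (0:ℝ) η,
      μ (ball x r) ≤ (M : ℝ≥0∞) * ENNReal.ofReal (s q r)} = 0 := by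
  classical
  have hq : 0 < q := lt_trans hα hαq
  set γ : ℝ := (α + q)/2 with hγdef
  have hγpos : 0 < γ := by rw [hγdef]; linarith
  have hαγ : α < γ := by rw [hγdef]; linarith
  have hγq : γ < q := by rw [hγdef]; linarith
  obtain ⟨l₁, hl₁, hev₁⟩ := exists_lambda hs hγpos hγq
  obtain ⟨l₃, hl₃, hev₃⟩ := exists_lambda hs hα hαγ
  -- one eventual statement collecting everything
  have hevAll : ∀ᶠ δ in 𝓝[>] (0:ℝ), δ ∈ Set.Ioo (0:ℝ) 1 ∧ s q δ ≤ s γ (δ ^ l₁) ∧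
      s γ δ ≤ (s α δ) ^ l₃ ∧ coveringNumber E δ * ENNReal.ofReal (s α δ) < 1 ∧
      s α δ ≤ 1 := by
    filter_upwards [evIoo, hev₁, hev₃, hbox.eventually_lt_const zero_lt_one,
      (sc_small hs hα one_pos).mono fun δ h => h.le] with δ h0 h1 h2 h3 h4
    exact ⟨h0, h1.1, h2.2, h3, h4⟩
  obtain ⟨η₀, hηpos, hηsub⟩ := mem_nhdsGT_iff_exists_Ioo_subset.1 hevAll
  have hηpos' : (0:ℝ) < η₀ := hηpos
  set κ : ℝ := Real.sqrt l₁ with hκdef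
  have hl₁pos : (0:ℝ) < l₁ := lt_trans one_pos hl₁
  have hκ1 : 1 < κ := by
    rw [hκdef]
    have : (1:ℝ) = Real.sqrt 1 := (Real.sqrt_one).symm
    rw [this]
    exact Real.sqrt_lt_sqrt (by norm_num) hl₁
  have hκκ : κ * κ = l₁ := Real.mul_self_sqrt hl₁pos.le
  set δ₀ : ℝ := min (η₀/2) ((1/2 : ℝ) ^ (1/(κ-1))) with hδ₀def
  have hhalfpow_pos : (0:ℝ) < (1/2 : ℝ) ^ (1/(κ-1)) := Real.rpow_pos_of_pos (by norm_num) _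
  have hδ₀pos : 0 < δ₀ := lt_min (by linarith) hhalfpow_pos
  have hδ₀lt1 : δ₀ < 1 := by
    have h1 : (1/2 : ℝ) ^ (1/(κ-1)) < 1 :=
      Real.rpow_lt_one (by norm_num) (by norm_num) (one_div_pos.2 (by linarith))
    exact lt_of_le_of_lt (min_le_right _ _) h1
  have hδ₀η : δ₀ < η₀ := lt_of_le_of_lt (min_le_left _ _) (by linarith)
  have hδ₀pow : δ₀ ^ (κ - 1) ≤ 1/2 := by
    calc δ₀ ^ (κ-1) ≤ ((1/2 : ℝ) ^ (1/(κ-1))) ^ (κ-1) :=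
          Real.rpow_le_rpow hδ₀pos.le (min_le_right _ _) (by linarith)
      _ = 1/2 := by
          rw [← Real.rpow_mul (by norm_num), one_div_mul_cancel (by linarith : κ - 1 ≠ 0),
            Real.rpow_one]
  have hPdel : ∀ δ : ℝ, δ ∈ Set.Ioc 0 δ₀ → δ ∈ Set.Ioo (0:ℝ) 1 ∧ s q δ ≤ s γ (δ ^ l₁) ∧
      s γ δ ≤ (s α δ) ^ l₃ ∧ coveringNumber E δ * ENNReal.ofReal (s α δ) < 1 ∧
      s α δ ≤ 1 := by
    intro δ hδ
    exact hηsub ⟨hδ.1, lt_of_le_of_lt hδ.2 hδ₀η⟩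
  -- the scale sequence
  set dd : ℕ → ℝ := fun j => δ₀ ^ ((κ ^ j : ℝ)) with hdd
  have hdd0 : dd 0 = δ₀ := by simp [hdd, Real.rpow_one]
  have hddpos : ∀ j, 0 < dd j := fun j => Real.rpow_pos_of_pos hδ₀pos _
  have hκpow_ge : ∀ j : ℕ, (1:ℝ) ≤ κ ^ j := fun j => one_le_pow₀ (by linarith)
  have hddle : ∀ j, dd j ≤ δ₀ := by
    intro j
    calc dd j ≤ δ₀ ^ (1:ℝ) :=
          Real.rpow_le_rpow_of_exponent_ge hδ₀pos hδ₀lt1.le (hκpow_ge j)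
      _ = δ₀ := Real.rpow_one _
  have hddIoc : ∀ j, dd j ∈ Set.Ioc (0:ℝ) δ₀ := fun j => ⟨hddpos j, hddle j⟩
  have hddIoo : ∀ j, dd j ∈ Set.Ioo (0:ℝ) 1 := fun j => (hPdel _ (hddIoc j)).1
  have hsucc : ∀ j, dd (j+1) = (dd j) ^ κ := by
    intro j
    rw [hdd]
    show δ₀ ^ ((κ ^ (j+1) : ℝ)) = (δ₀ ^ (κ ^ j : ℝ)) ^ κ
    rw [← Real.rpow_mul hδ₀pos.le, ← pow_succ]
  have hsucc2 : ∀ j, dd (j+2) = (dd j) ^ l₁ := by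
    intro j
    rw [hdd]
    show δ₀ ^ ((κ ^ (j+2) : ℝ)) = (δ₀ ^ (κ ^ j : ℝ)) ^ l₁
    rw [← Real.rpow_mul hδ₀pos.le, ← hκκ]
    ring_nf
  have hhalf : ∀ j, dd (j+1) ≤ dd j / 2 := by
    intro j
    rw [hsucc j]
    have h1 : (dd j) ^ κ = (dd j) ^ (κ - 1) * dd j := by
      rw [Real.rpow_sub_one (hddpos j).ne' κ, div_mul_cancel₀ _ (hddpos j).ne']
    rw [h1]
    have h2 : (dd j) ^ (κ-1) ≤ δ₀ ^ (κ-1) :=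
      Real.rpow_le_rpow (hddpos j).le (hddle j) (by linarith)
    have h3 : (dd j) ^ (κ-1) ≤ 1/2 := le_trans h2 hδ₀pow
    calc (dd j)^(κ-1) * dd j ≤ (1/2) * dd j :=
          mul_le_mul_of_nonneg_right h3 (hddpos j).le
      _ = dd j / 2 := by ring
  have hanti : ∀ j k, j ≤ k → dd k ≤ dd j := by
    intro j k hjk
    induction hjk with
    | refl => exact le_rfl
    | @step m h ih =>
        calc dd (m+1) ≤ dd m / 2 := hhalf m
          _ ≤ dd m := by linarith [hddpos m]
          _ ≤ dd j := ih
  have hddgeom : ∀ j, dd j ≤ δ₀ * (1/2)^j := by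
    intro j
    induction j with
    | zero => simp [hdd0]
    | succ n ih =>
        calc dd (n+1) ≤ dd n / 2 := hhalf n
          _ ≤ δ₀ * (1/2)^n / 2 := by linarith
          _ = δ₀ * (1/2)^(n+1) := by ring
  have hdd_tendsto : Tendsto dd atTop (𝓝 0) := by
    apply squeeze_zero (fun j => (hddpos j).le) hddgeom
    have hg : Tendsto (fun j : ℕ => ((1:ℝ)/2)^j) atTop (𝓝 0) :=
      tendsto_pow_atTop_nhds_zero_of_lt_one (by norm_num) (by norm_num)
    simpa using hg.const_mul δ₀
  -- gauges along the sequence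
  set g : ℕ → ℝ := fun j => s γ (dd j) with hgdef
  set a : ℕ → ℝ := fun j => s α (dd j) with hadef
  have hgpos : ∀ j, 0 < g j := fun j => hs.1 γ hγpos _ (hddIoo j)
  have hapos : ∀ j, 0 < a j := fun j => hs.1 α hα _ (hddIoo j)
  have ha1 : ∀ j, a j ≤ 1 := fun j => (hPdel _ (hddIoc j)).2.2.2.2
  have hgal : ∀ j, g j ≤ (a j) ^ l₃ := fun j => (hPdel _ (hddIoc j)).2.2.1
  have hg1 : ∀ j, g j ≤ 1 := by
    intro j
    calc g j ≤ (a j)^l₃ := hgal j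
      _ ≤ 1 := Real.rpow_le_one (hapos j).le (ha1 j) (by linarith)
  have hganti : ∀ j k, j ≤ k → g k ≤ g j :=
    fun j k hjk => hs.2.1 γ hγpos (hddIoo k) (hddIoo j) (hanti j k hjk)
  have hgtendsto : Tendsto g atTop (𝓝 0) := by
    apply (sc_tendsto_zero hs hγpos).comp
    rw [tendsto_nhdsWithin_iff]
    exact ⟨hdd_tendsto, Eventually.of_forall fun j => hddpos j⟩
  -- runs
  have hexists : ∀ i : ℕ, ∃ n : ℕ, i < n ∧ g n ≤ g i / 2 := by
    intro i
    have h2 : (0:ℝ) < g i / 2 := half_pos (hgpos i)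
    obtain ⟨N0, hN0⟩ := eventually_atTop.1 (hgtendsto.eventually_lt_const h2)
    exact ⟨max N0 (i+1), lt_of_lt_of_le (Nat.lt_succ_self i) (le_max_right _ _),
      (hN0 _ (le_max_left _ _)).le⟩
  set sqn : ℕ → ℕ := fun m => Nat.rec 0 (fun _ prev => Nat.find (hexists prev)) m with hsqn
  have hsqnsucc : ∀ m, sqn (m+1) = Nat.find (hexists (sqn m)) := fun m => rfl
  have hlt_sq : ∀ m, sqn m < sqn (m+1) := by
    intro m; rw [hsqnsucc]; exact (Nat.find_spec (hexists (sqn m))).1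
  have hg_half : ∀ m, g (sqn (m+1)) ≤ g (sqn m) / 2 := by
    intro m; rw [hsqnsucc]; exact (Nat.find_spec (hexists (sqn m))).2
  have hflat : ∀ m n, sqn m ≤ n → n < sqn (m+1) → g (sqn m) ≤ 2 * g n := by
    intro m n h1 h2
    rcases eq_or_lt_of_le h1 with heq | hlt
    · rw [← heq]; linarith [hgpos (sqn m)]
    · have hmin := Nat.find_min (hexists (sqn m)) (by rw [hsqnsucc] at h2; exact h2)
      push_neg at hmin
      have h3 := hmin hlt
      linarith
  have hg_sq : ∀ m, g (sqn m) ≤ g 0 / 2^m := by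
    intro m
    induction m with
    | zero =>
        simp only [pow_zero, div_one]
        exact le_of_eq rfl
    | succ n ih =>
        calc g (sqn (n+1)) ≤ g (sqn n) / 2 := hg_half n
          _ ≤ (g 0 / 2^n) / 2 := by linarith
          _ = g 0 / 2^(n+1) := by ring
  have hsq_ge : ∀ m, m ≤ sqn m := by
    intro m
    induction m with
    | zero => exact Nat.zero_le _
    | succ n ih => exact Nat.succ_le_of_lt (lt_of_le_of_lt ih (hlt_sq n))
  set e : ℕ → ℕ := fun m => sqn (m+1) - 1 with he
  have he1 : ∀ m, e m + 1 = sqn (m+1) := by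
    intro m
    have h := hlt_sq m
    simp only [he]
    omega
  have hsqle_e : ∀ m, sqn m ≤ e m := by
    intro m
    have h := hlt_sq m
    simp only [he]
    omega
  have he_lt : ∀ m, e m < sqn (m+1) := by
    intro m
    have h := hlt_sq m
    simp only [he]
    omega
  set rn : ℕ → ℕ := fun n => Nat.findGreatest (fun m => sqn m ≤ n) n with hrn
  have hrn_spec : ∀ n, sqn (rn n) ≤ n := by
    intro n
    have h0 : sqn 0 ≤ n := by
      have hz : sqn 0 = 0 := rfl
      omega
    exact Nat.findGreatest_spec (P := fun m => sqn m ≤ n) (Nat.zero_le n) h0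
  have hrn_ge : ∀ m₀ n, m₀ ≤ n → sqn m₀ ≤ n → m₀ ≤ rn n :=
    fun m₀ n h1 h2 => Nat.le_findGreatest h1 h2
  have hrn_lt : ∀ n, n < sqn (rn n + 1) := by
    intro n
    by_contra hcon
    push_neg at hcon
    have h1 : rn n + 1 ≤ n := le_trans (hsq_ge _) hcon
    exact Nat.findGreatest_is_greatest (Nat.lt_succ_self _) h1 hcon
  -- T sets
  set TT : ℕ → Set X := fun m => {x | x ∈ E ∧
    μ (ball x (2 * dd (e m))) ≤ 2 * (M:ℝ≥0∞) * ENNReal.ofReal (g (e m))} with hTT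
  -- the bad set
  set B : Set X := {x | x ∈ E ∧ ∀ η' > (0:ℝ), ∃ r ∈ Set.Ioo (0:ℝ) η',
    μ (ball x r) ≤ (M : ℝ≥0∞) * ENNReal.ofReal (s q r)} with hB
  have hcapture : ∀ x ∈ B, ∀ m₀ : ℕ, ∃ m, m₀ ≤ m ∧ x ∈ TT m := by
    intro x hx m₀
    obtain ⟨hxE, hxf⟩ := hx
    obtain ⟨r, hr, hμr⟩ := hxf (dd (sqn m₀)) (hddpos _)
    obtain ⟨jb, hjb⟩ := (hdd_tendsto.eventually_lt_const hr.1).exists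
    have hP0 : r ≤ dd 0 := by
      rw [hdd0]
      exact le_trans hr.2.le (hddle _)
    have hsqjb : sqn m₀ ≤ jb := by
      by_contra hcon
      push_neg at hcon
      have h1 : dd (sqn m₀) ≤ dd jb := hanti jb (sqn m₀) hcon.le
      linarith [hr.2, hjb]
    obtain ⟨i, hri, hri1, hi_ge⟩ : ∃ i : ℕ, r ≤ dd i ∧ dd (i+1) < r ∧ sqn m₀ ≤ i := by
      refine ⟨Nat.findGreatest (fun j => r ≤ dd j) jb,
        Nat.findGreatest_spec (P := fun j => r ≤ dd j) (Nat.zero_le jb) hP0,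
        ?_, Nat.le_findGreatest hsqjb hr.2.le⟩
      have hle := Nat.findGreatest_le (P := fun j => r ≤ dd j) jb
      have hltjb : Nat.findGreatest (fun j => r ≤ dd j) jb < jb := by
        rcases lt_or_eq_of_le hle with h | h
        · exact h
        · exfalso
          have hspec := Nat.findGreatest_spec (P := fun j => r ≤ dd j) (Nat.zero_le jb) hP0
          rw [h] at hspec
          linarith
      have hng := Nat.findGreatest_is_greatest (P := fun j => r ≤ dd j)
        (Nat.lt_succ_self _) (Nat.succ_le_of_lt hltjb)
      exact not_le.1 hng
    have hnge : sqn m₀ ≤ i + 2 := le_trans hi_ge (by omega)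
    refine ⟨rn (i+2), hrn_ge m₀ (i+2) (le_trans (hsq_ge m₀) hnge) hnge, hxE, ?_⟩
    have hne : i + 2 ≤ e (rn (i+2)) := by
      have h1 := hrn_lt (i+2)
      have h2 := he1 (rn (i+2))
      omega
    have hdn : 2 * dd (i+2) ≤ r := by
      have h1 : dd (i+2) ≤ dd (i+1) / 2 := hhalf (i+1)
      linarith
    have hstep1 : μ (ball x (2 * dd (e (rn (i+2))))) ≤ μ (ball x r) := by
      apply measure_mono (ball_subset_ball _)
      have h1 : dd (e (rn (i+2))) ≤ dd (i+2) := hanti _ _ hne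
      linarith
    have hrIoo : r ∈ Set.Ioo (0:ℝ) 1 :=
      ⟨hr.1, lt_trans (lt_of_lt_of_le hr.2 (hddle _)) hδ₀lt1⟩
    have hsqr : s q r ≤ g (i+2) := by
      calc s q r ≤ s q (dd i) := hs.2.1 q hq hrIoo (hddIoo i) hri
        _ ≤ s γ ((dd i) ^ l₁) := (hPdel _ (hddIoc i)).2.1
        _ = g (i+2) := (congrArg (s γ) (hsucc2 i)).symm
    have hgn_le : g (i+2) ≤ 2 * g (e (rn (i+2))) := by
      have h1 : g (i+2) ≤ g (sqn (rn (i+2))) := hganti _ _ (hrn_spec (i+2))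
      have h2 : g (sqn (rn (i+2))) ≤ 2 * g (e (rn (i+2))) :=
        hflat _ _ (hsqle_e _) (he_lt _)
      linarith
    calc μ (ball x (2 * dd (e (rn (i+2))))) ≤ μ (ball x r) := hstep1
      _ ≤ (M:ℝ≥0∞) * ENNReal.ofReal (s q r) := hμr
      _ ≤ (M:ℝ≥0∞) * ENNReal.ofReal (g (i+2)) :=
          mul_le_mul_right (ENNReal.ofReal_le_ofReal hsqr) _
      _ ≤ (M:ℝ≥0∞) * ENNReal.ofReal (2 * g (e (rn (i+2)))) :=
          mul_le_mul_right (ENNReal.ofReal_le_ofReal hgn_le) _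
      _ = 2 * (M:ℝ≥0∞) * ENNReal.ofReal (g (e (rn (i+2)))) := by
          rw [ENNReal.ofReal_mul (by norm_num : (0:ℝ) ≤ 2), ENNReal.ofReal_ofNat]
          ring
  -- exponents for the geometric bound
  set c₀ : ℝ := 1 - 1/l₃ with hc₀def
  have hl₃pos : (0:ℝ) < l₃ := lt_trans one_pos hl₃
  have hc₀pos : 0 < c₀ := by
    rw [hc₀def]
    have : 1/l₃ < 1 := by rw [div_lt_one hl₃pos]; exact hl₃
    linarith
  have hc₀le1 : c₀ ≤ 1 := by
    rw [hc₀def]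
    have : 0 < 1/l₃ := by positivity
    linarith
  set ρ : ℝ := (1/2 : ℝ) ^ c₀ with hρdef
  have hρpos : 0 < ρ := Real.rpow_pos_of_pos (by norm_num) _
  have hρlt1 : ρ < 1 := Real.rpow_lt_one (by norm_num) (by norm_num) hc₀pos
  have hgc : ∀ j, g j / a j ≤ (g j) ^ c₀ := by
    intro j
    have halb : (g j) ^ (1/l₃) ≤ a j := by
      calc (g j) ^ (1/l₃) ≤ ((a j) ^ l₃) ^ (1/l₃) :=
            Real.rpow_le_rpow (hgpos j).le (hgal j) (by positivity)
        _ = a j := by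
            rw [← Real.rpow_mul (hapos j).le, mul_one_div,
              div_self hl₃pos.ne', Real.rpow_one]
    have hpow_pos : 0 < (g j) ^ (1/l₃) := Real.rpow_pos_of_pos (hgpos j) _
    calc g j / a j ≤ g j / (g j) ^ (1/l₃) :=
          div_le_div_of_nonneg_left (hgpos j).le hpow_pos halb
      _ = (g j) ^ c₀ := by
          rw [hc₀def, Real.rpow_sub (hgpos j), Real.rpow_one]
  -- measure bound for the T sets
  have hTTbound : ∀ m : ℕ, μ (TT m) ≤ 4 * (M:ℝ≥0∞) * ENNReal.ofReal ((g 0) ^ c₀ * ρ ^ m) := by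
    intro m
    have hδeIoc : dd (e m) ∈ Set.Ioc (0:ℝ) δ₀ := hddIoc _
    have hNlt : coveringNumber E (dd (e m)) * ENNReal.ofReal (a (e m)) < 1 :=
      (hPdel _ hδeIoc).2.2.2.1
    have haof0 : ENNReal.ofReal (a (e m)) ≠ 0 := by
      simp only [ne_eq, ENNReal.ofReal_eq_zero, not_le]
      exact hapos _
    have hNtop : coveringNumber E (dd (e m)) ≠ ⊤ := by
      intro hcon
      rw [hcon, ENNReal.top_mul haof0] at hNlt
      exact absurd hNlt (by simp)
    have hlt' : coveringNumber E (dd (e m)) < coveringNumber E (dd (e m)) + 1 :=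
      ENNReal.lt_add_right hNtop one_ne_zero
    conv_lhs at hlt' => rw [_root_.coveringNumber]
    obtain ⟨t, ht⟩ := iInf_lt_iff.1 hlt'
    obtain ⟨hcond, hcard⟩ := iInf_lt_iff.1 ht
    have hcover : μ (TT m) ≤ ∑ cc ∈ t, μ (ball cc (dd (e m)) ∩ TT m) := by
      have hsub : TT m ⊆ ⋃ cc ∈ t, (ball cc (dd (e m)) ∩ TT m) := by
        intro x hx
        obtain ⟨cc, hcct, hcc⟩ := mem_iUnion₂.1 (hcond.2 hx.1)
        exact mem_iUnion₂.2 ⟨cc, hcct, hcc, hx⟩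
      exact le_trans (measure_mono hsub) (measure_biUnion_finset_le t _)
    have hterm : ∀ cc ∈ t,
        μ (ball cc (dd (e m)) ∩ TT m) ≤ 2 * (M:ℝ≥0∞) * ENNReal.ofReal (g (e m)) := by
      intro cc _
      rcases (ball cc (dd (e m)) ∩ TT m).eq_empty_or_nonempty with hemp | ⟨y, hy⟩
      · rw [hemp]; simp
      · have hsub2 : ball cc (dd (e m)) ⊆ ball y (2 * dd (e m)) := by
          apply ball_subset_ball'
          have hd : dist cc y < dd (e m) := by rw [dist_comm]; exact hy.1
          linarith
        calc μ (ball cc (dd (e m)) ∩ TT m) ≤ μ (ball y (2 * dd (e m))) :=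
              measure_mono (le_trans inter_subset_left hsub2)
          _ ≤ 2 * (M:ℝ≥0∞) * ENNReal.ofReal (g (e m)) := hy.2.2
    have h1 : μ (TT m) ≤ (t.card : ℝ≥0∞) * (2 * (M:ℝ≥0∞) * ENNReal.ofReal (g (e m))) := by
      calc μ (TT m) ≤ ∑ cc ∈ t, μ (ball cc (dd (e m)) ∩ TT m) := hcover
        _ ≤ ∑ _cc ∈ t, 2 * (M:ℝ≥0∞) * ENNReal.ofReal (g (e m)) := Finset.sum_le_sum hterm
        _ = (t.card : ℝ≥0∞) * (2 * (M:ℝ≥0∞) * ENNReal.ofReal (g (e m))) := by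
            rw [Finset.sum_const, nsmul_eq_mul]
    have hNg : coveringNumber E (dd (e m)) * ENNReal.ofReal (g (e m))
        ≤ ENNReal.ofReal ((g (e m)) ^ c₀) := by
      have hgid : ENNReal.ofReal (g (e m))
          = ENNReal.ofReal (a (e m)) * ENNReal.ofReal (g (e m) / a (e m)) := by
        rw [← ENNReal.ofReal_mul (hapos _).le]
        congr 1
        rw [mul_comm, div_mul_cancel₀ _ (hapos (e m)).ne']
      calc coveringNumber E (dd (e m)) * ENNReal.ofReal (g (e m))
          = (coveringNumber E (dd (e m)) * ENNReal.ofReal (a (e m)))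
            * ENNReal.ofReal (g (e m) / a (e m)) := by rw [hgid]; ring
        _ ≤ 1 * ENNReal.ofReal (g (e m) / a (e m)) := mul_le_mul_left hNlt.le _
        _ = ENNReal.ofReal (g (e m) / a (e m)) := one_mul _
        _ ≤ ENNReal.ofReal ((g (e m)) ^ c₀) := ENNReal.ofReal_le_ofReal (hgc _)
    have hg_extra : ENNReal.ofReal (g (e m)) ≤ ENNReal.ofReal ((g (e m)) ^ c₀) := by
      apply ENNReal.ofReal_le_ofReal
      calc g (e m) = (g (e m)) ^ (1:ℝ) := (Real.rpow_one _).symm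
        _ ≤ (g (e m)) ^ c₀ := Real.rpow_le_rpow_of_exponent_ge (hgpos _) (hg1 _) hc₀le1
    have hreal : ((g (e m)) : ℝ) ^ c₀ ≤ (g 0) ^ c₀ * ρ ^ m := by
      have hge : g (e m) ≤ g 0 / 2 ^ m := le_trans (hganti _ _ (hsqle_e m)) (hg_sq m)
      calc (g (e m)) ^ c₀ ≤ (g 0 / 2 ^ m) ^ c₀ :=
            Real.rpow_le_rpow (hgpos _).le hge hc₀pos.le
        _ = (g 0 * (1/2)^m) ^ c₀ := by
            congr 1
            rw [div_eq_mul_inv, one_div, inv_pow]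
        _ = (g 0) ^ c₀ * ((1/2 : ℝ)^m) ^ c₀ :=
            Real.mul_rpow (hgpos 0).le (by positivity)
        _ = (g 0) ^ c₀ * ρ ^ m := by
            congr 1
            rw [hρdef, ← Real.rpow_natCast ((1/2:ℝ)) m, ← Real.rpow_mul (by norm_num),
              ← Real.rpow_natCast ((1/2:ℝ) ^ c₀) m, ← Real.rpow_mul (by norm_num), mul_comm]
    calc μ (TT m) ≤ (t.card : ℝ≥0∞) * (2 * (M:ℝ≥0∞) * ENNReal.ofReal (g (e m))) := h1
      _ ≤ (coveringNumber E (dd (e m)) + 1) * (2 * (M:ℝ≥0∞) * ENNReal.ofReal (g (e m))) :=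
          mul_le_mul_left hcard.le _
      _ = 2 * (M:ℝ≥0∞) * (coveringNumber E (dd (e m)) * ENNReal.ofReal (g (e m)))
          + 2 * (M:ℝ≥0∞) * ENNReal.ofReal (g (e m)) := by ring
      _ ≤ 2 * (M:ℝ≥0∞) * ENNReal.ofReal ((g (e m)) ^ c₀)
          + 2 * (M:ℝ≥0∞) * ENNReal.ofReal ((g (e m)) ^ c₀) :=
          add_le_add (mul_le_mul_right hNg _) (mul_le_mul_right hg_extra _)
      _ = 4 * (M:ℝ≥0∞) * ENNReal.ofReal ((g (e m)) ^ c₀) := by ring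
      _ ≤ 4 * (M:ℝ≥0∞) * ENNReal.ofReal ((g 0) ^ c₀ * ρ ^ m) :=
          mul_le_mul_right (ENNReal.ofReal_le_ofReal hreal) _
  -- sum the tails
  have hest : ∀ m₀ : ℕ, μ B ≤ (4 * (M:ℝ≥0∞) * ENNReal.ofReal ((g 0) ^ c₀)
      * (1 - ENNReal.ofReal ρ)⁻¹) * ENNReal.ofReal ρ ^ m₀ := by
    intro m₀
    have hBsub : B ⊆ ⋃ k : ℕ, TT (m₀ + k) := by
      intro x hx
      obtain ⟨m, hm, hxm⟩ := hcapture x hx m₀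
      exact mem_iUnion.2 ⟨m - m₀, by rwa [Nat.add_sub_cancel' hm]⟩
    have hofeq : ∀ k : ℕ, ENNReal.ofReal ((g 0) ^ c₀ * ρ ^ (m₀ + k))
        = ENNReal.ofReal ((g 0) ^ c₀) * ENNReal.ofReal ρ ^ m₀ * ENNReal.ofReal ρ ^ k := by
      intro k
      rw [ENNReal.ofReal_mul (Real.rpow_nonneg (hgpos 0).le _), ENNReal.ofReal_pow hρpos.le,
        pow_add, mul_assoc]
    calc μ B ≤ ∑' k : ℕ, μ (TT (m₀ + k)) :=
          le_trans (measure_mono hBsub) (measure_iUnion_le _)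
      _ ≤ ∑' k : ℕ, 4 * (M:ℝ≥0∞) * ENNReal.ofReal ((g 0) ^ c₀ * ρ ^ (m₀ + k)) :=
          Summable.tsum_le_tsum (fun k => hTTbound _) ENNReal.summable ENNReal.summable
      _ = ∑' k : ℕ, (4 * (M:ℝ≥0∞) * ENNReal.ofReal ((g 0) ^ c₀) * ENNReal.ofReal ρ ^ m₀)
          * ENNReal.ofReal ρ ^ k := by
          congr 1
          funext k
          rw [hofeq k]
          ring
      _ = (4 * (M:ℝ≥0∞) * ENNReal.ofReal ((g 0) ^ c₀) * ENNReal.ofReal ρ ^ m₀)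
          * (1 - ENNReal.ofReal ρ)⁻¹ := by
          rw [ENNReal.tsum_mul_left, ENNReal.tsum_geometric]
      _ = (4 * (M:ℝ≥0∞) * ENNReal.ofReal ((g 0) ^ c₀) * (1 - ENNReal.ofReal ρ)⁻¹)
          * ENNReal.ofReal ρ ^ m₀ := by ring
  have hρ1 : ENNReal.ofReal ρ < 1 := by
    rw [← ENNReal.ofReal_one]
    exact (ENNReal.ofReal_lt_ofReal_iff one_pos).2 hρlt1
  have hCne : (4 * (M:ℝ≥0∞) * ENNReal.ofReal ((g 0) ^ c₀)
      * (1 - ENNReal.ofReal ρ)⁻¹) ≠ ⊤ := by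
    apply ENNReal.mul_ne_top
    · apply ENNReal.mul_ne_top
      · exact ENNReal.mul_ne_top (by simp) (ENNReal.natCast_ne_top M)
      · exact ENNReal.ofReal_ne_top
    · rw [ENNReal.inv_ne_top]
      exact (tsub_pos_of_lt hρ1).ne'
  have htends : Tendsto (fun m₀ : ℕ => (4 * (M:ℝ≥0∞) * ENNReal.ofReal ((g 0) ^ c₀)
      * (1 - ENNReal.ofReal ρ)⁻¹) * ENNReal.ofReal ρ ^ m₀) atTop (𝓝 0) := by
    have h0 : Tendsto (fun m₀ : ℕ => ENNReal.ofReal ρ ^ m₀) atTop (𝓝 0) :=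
      ENNReal.tendsto_pow_atTop_nhds_zero_of_lt_one hρ1
    have := ENNReal.Tendsto.const_mul h0 (Or.inr hCne)
    simpa using this
  have : μ B ≤ 0 := ge_of_tendsto' htends hest
  exact le_antisymm this (zero_le)

end ScaleProofPart2
section ScaleProofPart2b

open Filter MeasureTheory Metric Set
open scoped ENNReal Topology NNReal

variable {s : ℝ → ℝ → ℝ} {X : Type*} [MetricSpace X] [MeasurableSpace X]

private theorem ae_uls_le (hs : IsScaling s) (μ : Measure X) (E : Set X) :
    ∀ᵐ x ∂μ, x ∈ E → upperLocalScale s μ x ≤ upperBoxScale s E := by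
  classical
  set b := upperBoxScale s E with hb
  set S : ℚ → ℕ → Set X := fun p M =>
    if b < ENNReal.ofReal (p:ℝ) then
      {x | x ∈ E ∧ ∀ η > (0:ℝ), ∃ r ∈ Set.Ioo (0:ℝ) η,
        μ (ball x r) ≤ (M : ℝ≥0∞) * ENNReal.ofReal (s (p:ℝ) r)}
    else ∅ with hS
  have hSnull : ∀ p M, μ (S p M) = 0 := by
    intro p M
    simp only [hS]
    split_ifs with hp
    · rw [hb, upperBoxScale] at hp
      obtain ⟨α, hα⟩ := iInf_lt_iff.1 hp
      obtain ⟨hcond, hlt⟩ := iInf_lt_iff.1 hα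
      have hppos : (0:ℝ) < (p:ℝ) := by
        by_contra hle
        push_neg at hle
        rw [ENNReal.ofReal_eq_zero.2 hle] at hlt
        exact absurd hlt (not_lt_of_ge (zero_le))
      have hαp : α < (p:ℝ) := (ENNReal.ofReal_lt_ofReal_iff hppos).1 hlt
      exact core2 hs μ hcond.1 hαp hcond.2 M
    · exact measure_empty
  set N : Set X := ⋃ p : ℚ, ⋃ M : ℕ, S p M with hN
  have hNnull : μ N = 0 := by
    rw [hN, measure_iUnion_null_iff]
    intro p
    rw [measure_iUnion_null_iff]
    exact hSnull p
  have hae : ∀ᵐ x ∂μ, x ∉ N := by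
    rw [ae_iff]
    simpa using hNnull
  filter_upwards [hae] with x hx hxE
  by_contra hgt
  push_neg at hgt
  obtain ⟨p, hp0, h1, h2⟩ := ENNReal.lt_iff_exists_rat_btwn.1 hgt
  rw [toNNReal_coe_eq_ofReal] at h1 h2
  have hppos : (0:ℝ) < (p:ℝ) := by
    by_contra hle
    push_neg at hle
    rw [ENNReal.ofReal_eq_zero.2 hle] at h1
    exact absurd h1 (not_lt_of_ge (zero_le))
  have hQ : Tendsto (fun ε : ℝ => μ (ball x ε) / ENNReal.ofReal (s (p:ℝ) ε))
      (𝓝[>] (0:ℝ)) (𝓝 ⊤) := by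
    by_contra hnot
    rw [ENNReal.tendsto_nhds_top_iff_nat] at hnot
    push_neg at hnot
    obtain ⟨M, hM⟩ := hnot
    replace hM : ∃ᶠ ε in 𝓝[>] (0:ℝ), ¬ (M:ℝ≥0∞) < μ (ball x ε) / ENNReal.ofReal (s (p:ℝ) ε) :=
      hM.mono fun _ h => not_lt.2 h
    have hxS : x ∈ S p M := by
      simp only [hS]
      rw [if_pos h1]
      refine ⟨hxE, ?_⟩
      intro η hη
      have hfreq : ∃ᶠ ε in 𝓝[>] (0:ℝ),
          (¬ (M:ℝ≥0∞) < μ (ball x ε) / ENNReal.ofReal (s (p:ℝ) ε))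
          ∧ ε ∈ Set.Ioo (0:ℝ) 1 ∧ ε ∈ Set.Ioo (0:ℝ) η := by
        apply hM.and_eventually
        filter_upwards [evIoo,
          eventually_mem_set.2 (Ioo_mem_nhdsGT_of_mem ⟨le_refl (0:ℝ), hη⟩)] with ε ha hb'
        exact ⟨ha, hb'⟩
      obtain ⟨ε, hε1, hε2, hε3⟩ := hfreq.exists
      refine ⟨ε, hε3, ?_⟩
      have hne0 : ENNReal.ofReal (s (p:ℝ) ε) ≠ 0 := by
        simp only [ne_eq, ENNReal.ofReal_eq_zero, not_le]
        exact hs.1 _ hppos ε hε2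
      have hle := not_lt.1 hε1
      exact (ENNReal.div_le_iff_le_mul (Or.inl hne0) (Or.inl ENNReal.ofReal_ne_top)).1 hle
    exact hx (mem_iUnion.2 ⟨p, mem_iUnion.2 ⟨M, hxS⟩⟩)
  have hle : upperLocalScale s μ x ≤ ENNReal.ofReal (p:ℝ) := by
    rw [upperLocalScale]
    exact iInf₂_le (p:ℝ) ⟨hppos, hQ⟩
  exact absurd (lt_of_le_of_lt hle h2) (lt_irrefl _)

end ScaleProofPart2b
/-- The essential suprema of the local scales of a Borel measure are bounded by the
Hausdorff and packing scales of the ambient metric space. -/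
theorem essSup_localScale_le_hausdorff_packing
    {X : Type*} [MetricSpace X] [MeasurableSpace X] [BorelSpace X]
    (μ : Measure X) (s : ℝ → ℝ → ℝ) (hs : IsScaling s) :
    essSup (lowerLocalScale s μ) μ ≤ hausdorffScale s (Set.univ : Set X) ∧
    essSup (upperLocalScale s μ) μ ≤ packingScale s (Set.univ : Set X) := by
  constructor
  · exact part1 hs μ
  · rw [packingScale]
    refine le_iInf fun F => le_iInf fun hF => ?_
    refine essSup_le_of_ae_le _ ?_
    have hae : ∀ᵐ x ∂μ, ∀ n : ℕ, x ∈ F n → upperLocalScale s μ x ≤ upperBoxScale s (F n) := by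
      rw [ae_all_iff]
      intro n
      exact ae_uls_le hs μ (F n)
    filter_upwards [hae] with x hx
    have hxuniv : x ∈ ⋃ n, F n := by rw [hF]; trivial
    obtain ⟨n, hn⟩ := mem_iUnion.1 hxuniv
    exact le_trans (hx n hn) (le_iSup (fun n => upperBoxScale s (F n)) n)

end
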